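/- Let A be a real symmetric n×n matrix and let x be a nonzero vector in ℝⁿ. Set c = cos(A, xxᵀ) = (xᵀAx)/((xᵀx)·‖A‖_F) and assume c > 1/√2. Then the largest eigenvalue λ₁(A) of A is simple and dominant; more precisely, λ₁(A)² > Σ_{i=2}^{n} λᵢ(A)², so in particular λ₁(A) > |λᵢ(A)| for every i ≥ 2. -/

import Mathlib

open Matrix Polynomial BigOperators

/-- The Frobenius norm of a real matrix. -/
noncomputable def frob {m : Type*} [Fintype m] (A : Matrix m m ℝ) : ℝ :=
  Real.sqrt (∑ i, ∑ j, (A i j) ^ 2)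

lemma charpoly_conj_aux {n : ℕ} (U V A : Matrix (Fin n) (Fin n) ℝ)
    (h1 : U * V = 1) : (U * A * V).charpoly = A.charpoly := by
  have hUV : (C : ℝ →+* ℝ[X]).mapMatrix U * (C : ℝ →+* ℝ[X]).mapMatrix V = 1 := by
    rw [← _root_.map_mul, h1, _root_.map_one]
  have key : charmatrix (U * A * V)
      = (C : ℝ →+* ℝ[X]).mapMatrix U * charmatrix A * (C : ℝ →+* ℝ[X]).mapMatrix V := by
    simp only [charmatrix, mul_sub, sub_mul, _root_.map_mul]
    congr 1
    rw [Matrix.scalar_apply, ← Matrix.smul_one_eq_diagonal, mul_smul_comm, smul_mul_assoc, Matrix.mul_one,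
      hUV]
  have hdet : ((C : ℝ →+* ℝ[X]).mapMatrix U).det * ((C : ℝ →+* ℝ[X]).mapMatrix V).det = 1 := by
    rw [← det_mul, hUV, det_one]
  rw [Matrix.charpoly, key, det_mul, det_mul, Matrix.charpoly]
  linear_combination A.charmatrix.det * hdet

lemma charpoly_diagonal_aux {n : ℕ} (d : Fin n → ℝ) :
    (Matrix.diagonal d).charpoly = ∏ i, (X - C (d i)) := by
  rw [Matrix.charpoly]
  have : charmatrix (Matrix.diagonal d) = Matrix.diagonal (fun i => X - C (d i)) := by
    ext i j
    by_cases h : i = j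
    · subst h; simp
    · simp [h, Matrix.diagonal_apply_ne _ h]
  rw [this, det_diagonal]

theorem largest_eigenvalue_simple_dominant
    (n : ℕ) (hn : 0 < n) (A : Matrix (Fin n) (Fin n) ℝ) (hA : A.IsSymm)
    (x : Fin n → ℝ) (hx : x ≠ 0)
    (μ : Fin n → ℝ) (hmono : Antitone μ)
    (hchar : A.charpoly = ∏ i, (X - C (μ i)))
    (c : ℝ) (hc : c = (x ⬝ᵥ A.mulVec x) / ((x ⬝ᵥ x) * frob A))
    (hcbig : 1 / Real.sqrt 2 < c) :
    (∑ i ∈ Finset.univ.erase (⟨0, hn⟩ : Fin n), (μ i) ^ 2) < (μ ⟨0, hn⟩) ^ 2 ∧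
      ∀ i : Fin n, i ≠ ⟨0, hn⟩ → |μ i| < μ ⟨0, hn⟩ := by
  classical
  have hA' : A.IsHermitian := by
    rw [Matrix.IsHermitian]
    ext i j
    simpa using hA.apply i j
  set B : Matrix (Fin n) (Fin n) ℝ := (hA'.eigenvectorUnitary : Matrix (Fin n) (Fin n) ℝ) with hB
  set E : Fin n → ℝ := hA'.eigenvalues with hE
  have hBs : B * star B = 1 := (Matrix.mem_unitaryGroup_iff).mp (hA'.eigenvectorUnitary).2
  have hsB : star B * B = 1 := (Matrix.mem_unitaryGroup_iff').mp (hA'.eigenvectorUnitary).2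
  have hspec : A = B * Matrix.diagonal E * star B := by
    have h := hA'.spectral_theorem
    have hco : (RCLike.ofReal ∘ hA'.eigenvalues : Fin n → ℝ) = E := by
      funext i; simp [hE]
    rwa [hco] at h
  -- charpoly of A in terms of E
  have hcharE : A.charpoly = ∏ i, (X - C (E i)) := by
    rw [hspec, charpoly_conj_aux _ _ _ hBs, charpoly_diagonal_aux]
  -- multiset equality
  have hmult : (Finset.univ.val.map μ) = (Finset.univ.val.map E) := by
    have h1 : (∏ i, (X - C (μ i))) = (∏ i, (X - C (E i))) := by
      rw [← hchar, hcharE]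
    have h2 : ((Finset.univ.val.map μ).map fun a => X - C a).prod
        = ((Finset.univ.val.map E).map fun a => X - C a).prod := by
      simpa [Multiset.map_map, Function.comp_def, Finset.prod] using h1
    have := congrArg Polynomial.roots h2
    rwa [Polynomial.roots_multiset_prod_X_sub_C, Polynomial.roots_multiset_prod_X_sub_C] at this
  -- sum of squares equality
  have hsumsq : ∑ i, (μ i) ^ 2 = ∑ i, (E i) ^ 2 := by
    have := congrArg (fun s : Multiset ℝ => (s.map fun a => a ^ 2).sum) hmult
    simpa [Multiset.map_map, Function.comp_def, Finset.sum] using this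
  -- every eigenvalue is at most μ 0
  have hEle : ∀ i, E i ≤ μ ⟨0, hn⟩ := by
    intro i
    have hmem : E i ∈ Finset.univ.val.map μ := by
      rw [hmult]; exact Multiset.mem_map.mpr ⟨i, Finset.mem_univ_val i, rfl⟩
    obtain ⟨j, _, hj⟩ := Multiset.mem_map.mp hmem
    rw [← hj]
    exact hmono (Fin.mk_le_of_le_val (Nat.zero_le _))
  -- Frobenius norm squared = sum of squares of eigenvalues
  have hfrobsq : ∑ i, ∑ j, (A i j) ^ 2 = ∑ i, (E i) ^ 2 := by
    have htr : ∑ i, ∑ j, (A i j) ^ 2 = Matrix.trace (A * A) := by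
      simp only [Matrix.trace, Matrix.diag, Matrix.mul_apply]
      refine Finset.sum_congr rfl fun i _ => Finset.sum_congr rfl fun j _ => ?_
      rw [sq, hA.apply i j]
    have hAA : A * A = B * (Matrix.diagonal E * Matrix.diagonal E) * star B := by
      rw [hspec]
      simp only [Matrix.mul_assoc]
      rw [← Matrix.mul_assoc (star B) B, hsB, Matrix.one_mul]
    rw [htr, hAA, Matrix.trace_mul_cycle, ← Matrix.mul_assoc, hsB, Matrix.one_mul,
      Matrix.diagonal_mul_diagonal, Matrix.trace_diagonal]
    exact Finset.sum_congr rfl fun i _ => (sq (E i)).symm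
  -- Rayleigh bound
  set y : Fin n → ℝ := Bᵀ *ᵥ x with hy
  have hstarB : star B = Bᵀ := by
    ext i j; simp [Matrix.star_apply]
  have hray1 : x ⬝ᵥ A *ᵥ x = ∑ i, E i * (y i) ^ 2 := by
    rw [hspec, hstarB, ← Matrix.mulVec_mulVec, ← Matrix.mulVec_mulVec,
      Matrix.dotProduct_mulVec x B, ← Matrix.mulVec_transpose]
    simp [dotProduct, Matrix.mulVec_diagonal, hy]
    ring_nf
    exact Finset.sum_congr rfl fun i _ => by ring
  have hray2 : x ⬝ᵥ x = ∑ i, (y i) ^ 2 := by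
    have : y ⬝ᵥ y = x ⬝ᵥ x := by
      rw [hy, Matrix.dotProduct_mulVec (Bᵀ *ᵥ x) Bᵀ x, ← Matrix.mulVec_transpose,
        Matrix.transpose_transpose, Matrix.mulVec_mulVec, ← hstarB, hBs, Matrix.one_mulVec]
    rw [← this]
    simp [dotProduct, sq]
  have hrayleigh : x ⬝ᵥ A *ᵥ x ≤ μ ⟨0, hn⟩ * (x ⬝ᵥ x) := by
    rw [hray1, hray2, Finset.mul_sum]
    exact Finset.sum_le_sum fun i _ =>
      mul_le_mul_of_nonneg_right (hEle i) (sq_nonneg _)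
  -- positivity facts
  have ht : 0 < x ⬝ᵥ x := by
    have hnn : 0 ≤ x ⬝ᵥ x := Finset.sum_nonneg fun i _ => mul_self_nonneg (x i)
    rcases lt_or_eq_of_le hnn with h | h
    · exact h
    · exact absurd (dotProduct_self_eq_zero.mp h.symm) hx
  set S : ℝ := ∑ i, (μ i) ^ 2 with hS
  have hSnn : 0 ≤ S := Finset.sum_nonneg fun i _ => sq_nonneg _
  have hfrob : frob A = Real.sqrt S := by
    rw [frob, hfrobsq, ← hsumsq]
  have hc2 : (0:ℝ) < 1 / Real.sqrt 2 := by positivity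
  have hfrobpos : 0 < Real.sqrt S := by
    rcases lt_or_eq_of_le (Real.sqrt_nonneg S) with h | h
    · exact h
    · exfalso
      rw [hc, hfrob, ← h, mul_zero, div_zero] at hcbig
      linarith
  have hSpos : 0 < S := by
    by_contra h
    push_neg at h
    have : S = 0 := le_antisymm h hSnn
    rw [this, Real.sqrt_zero] at hfrobpos; linarith
  -- derive μ0 > sqrt S / sqrt 2
  have hcle : c ≤ μ ⟨0, hn⟩ / Real.sqrt S := by
    rw [hc, hfrob]
    rw [div_le_div_iff₀ (by positivity) hfrobpos]
    calc x ⬝ᵥ A *ᵥ x * Real.sqrt S ≤ (μ ⟨0, hn⟩ * (x ⬝ᵥ x)) * Real.sqrt S := by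
          apply mul_le_mul_of_nonneg_right hrayleigh (le_of_lt hfrobpos)
      _ = μ ⟨0, hn⟩ * (x ⬝ᵥ x * Real.sqrt S) := by ring
  have hmu0 : Real.sqrt S / Real.sqrt 2 < μ ⟨0, hn⟩ := by
    have h1 : 1 / Real.sqrt 2 < μ ⟨0, hn⟩ / Real.sqrt S := lt_of_lt_of_le hcbig hcle
    have h2 : Real.sqrt S * (1 / Real.sqrt 2) < Real.sqrt S * (μ ⟨0, hn⟩ / Real.sqrt S) :=
      mul_lt_mul_of_pos_left h1 hfrobpos
    rw [mul_div_cancel₀ _ (ne_of_gt hfrobpos)] at h2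
    calc Real.sqrt S / Real.sqrt 2 = Real.sqrt S * (1 / Real.sqrt 2) := by ring
      _ < _ := h2
  have hmu0pos : 0 < μ ⟨0, hn⟩ := lt_of_le_of_lt (by positivity) hmu0
  have hmu0sq : S / 2 < (μ ⟨0, hn⟩) ^ 2 := by
    have h2 : (Real.sqrt S / Real.sqrt 2) ^ 2 = S / 2 := by
      rw [div_pow, Real.sq_sqrt hSnn, Real.sq_sqrt (by norm_num : (0:ℝ) ≤ 2)]
    calc S / 2 = (Real.sqrt S / Real.sqrt 2) ^ 2 := h2.symm
      _ < (μ ⟨0, hn⟩) ^ 2 := pow_lt_pow_left₀ hmu0 (by positivity) (by norm_num)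
  have hsplit : S = (μ ⟨0, hn⟩) ^ 2 + ∑ i ∈ Finset.univ.erase (⟨0, hn⟩ : Fin n), (μ i) ^ 2 := by
    rw [hS, ← Finset.add_sum_erase _ _ (Finset.mem_univ _)]
  have hmain : (∑ i ∈ Finset.univ.erase (⟨0, hn⟩ : Fin n), (μ i) ^ 2) < (μ ⟨0, hn⟩) ^ 2 := by
    nlinarith [hmu0sq, hsplit]
  refine ⟨hmain, fun i hi => ?_⟩
  have hle : (μ i) ^ 2 ≤ ∑ j ∈ Finset.univ.erase (⟨0, hn⟩ : Fin n), (μ j) ^ 2 :=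
    Finset.single_le_sum (fun j _ => sq_nonneg (μ j)) (Finset.mem_erase.mpr ⟨hi, Finset.mem_univ i⟩)
  nlinarith [sq_abs (μ i), abs_nonneg (μ i), hmu0pos]
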